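/- The standard representation V = ℂ² of Dic∞ is simple (its only Dic∞-invariant subspaces are 0 and ℂ²) and self-dual (V is isomorphic to its dual representation as a Dic∞-representation). -/
import Mathlib


open scoped TensorProduct
open Matrix

noncomputable section

/-- `ℂ²`, the standard two-dimensional complex vector space. -/
abbrev V2 : Type := Fin 2 → ℂ

/-- The standard representation of a subgroup `G ≤ GL₂(ℂ)` on `ℂ²`, by matrix-vector
multiplication. -/
def stdRep (G : Subgroup (GL (Fin 2) ℂ)) : Representation ℂ G V2 where
  toFun g := Matrix.toLin' ((g : GL (Fin 2) ℂ) : Matrix (Fin 2) (Fin 2) ℂ)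
  map_one' := by
    simp only [OneMemClass.coe_one, Units.val_one, Matrix.toLin'_one]
    rfl
  map_mul' g h := by
    simp only [MulMemClass.coe_mul, Units.val_mul, Matrix.toLin'_mul]
    rfl

lemma stdRep_apply (G : Subgroup (GL (Fin 2) ℂ)) (g : G) (v : V2) :
    stdRep G g v = ((g : GL (Fin 2) ℂ) : Matrix (Fin 2) (Fin 2) ℂ) *ᵥ v := by
  simp [stdRep, Matrix.toLin'_apply]

/-- the symplectic form as a linear equiv to the dual -/
def omegaEquiv : V2 ≃ₗ[ℂ] Module.Dual ℂ V2 where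
  toFun v :=
    { toFun := fun w => v 0 * w 1 - v 1 * w 0
      map_add' := fun w₁ w₂ => by simp [Pi.add_apply]; ring
      map_smul' := fun c w => by simp [Pi.smul_apply, smul_eq_mul]; ring }
  map_add' v₁ v₂ := by ext w; simp [Pi.add_apply]; ring
  map_smul' c v := by ext w; simp [Pi.smul_apply, smul_eq_mul]; ring
  invFun φ := ![φ ![0, 1], -φ ![1, 0]]
  left_inv v := by
    funext i
    fin_cases i <;> simp [Matrix.cons_val_zero, Matrix.cons_val_one]
  right_inv φ := by
    refine LinearMap.ext fun w => ?_
    have hw : w = w 0 • ![(1:ℂ), 0] + w 1 • ![(0:ℂ), 1] := by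
      funext i; fin_cases i <;> simp
    simp only [LinearMap.coe_mk, AddHom.coe_mk, Matrix.cons_val_zero,
      Matrix.cons_val_one, Matrix.head_cons]
    conv_rhs => rw [hw, map_add, _root_.map_smul, _root_.map_smul]
    simp only [smul_eq_mul]
    ring

theorem stdRep_dicyclicInf_simple_and_selfDual
    (θ : ℝ) (hθ : Irrational (θ / Real.pi)) (X A : GL (Fin 2) ℂ)
    (hX : (X : Matrix (Fin 2) (Fin 2) ℂ) = !![0, -1; 1, 0])
    (hA : (A : Matrix (Fin 2) (Fin 2) ℂ) =
      !![Complex.exp (θ * Complex.I), 0; 0, Complex.exp (-(θ * Complex.I))])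
    (G : Subgroup (GL (Fin 2) ℂ)) (hG : G = Subgroup.closure {X, A}) :
    (∀ p : Submodule ℂ V2,
        (∀ (g : G) (v : V2), v ∈ p → stdRep G g v ∈ p) → p = ⊥ ∨ p = ⊤) ∧
    ∃ f : V2 ≃ₗ[ℂ] Module.Dual ℂ V2,
      ∀ (g : G) (v : V2), f (stdRep G g v) = (stdRep G).dual g (f v) := by
  have hXG : X ∈ G := by rw [hG]; exact Subgroup.subset_closure (by simp)
  have hAG : A ∈ G := by rw [hG]; exact Subgroup.subset_closure (by simp)
  -- λ ≠ μ
  have hne : Complex.exp (θ * Complex.I) ≠ Complex.exp (-(θ * Complex.I)) := by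
    intro h
    rw [Complex.exp_eq_exp_iff_exists_int] at h
    obtain ⟨n, hn⟩ := h
    have hθπ : (θ : ℂ) = n * Real.pi := by
      have hI : Complex.I ≠ 0 := Complex.I_ne_zero
      have h2 : ((θ : ℂ) * 2) * Complex.I = ((n : ℂ) * (2 * Real.pi)) * Complex.I := by
        linear_combination hn
      have := mul_right_cancel₀ hI h2
      linear_combination this / 2
    have hθr : θ = n * Real.pi := by exact_mod_cast hθπ
    apply hθ.ne_int n
    rw [hθr]
    field_simp
  constructor
  · -- simplicity
    intro p hp
    by_cases hbot : p = ⊥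
    · exact Or.inl hbot
    · right
      obtain ⟨v, hv, hv0⟩ := Submodule.exists_mem_ne_zero_of_ne_bot hbot
      set lam := Complex.exp (θ * Complex.I)
      set mu := Complex.exp (-(θ * Complex.I))
      have hAv : stdRep G ⟨A, hAG⟩ v = ![lam * v 0, mu * v 1] := by
        rw [stdRep_apply]
        simp only [hA]
        funext i
        fin_cases i <;> simp [Matrix.mulVec, dotProduct, Fin.sum_univ_two]
      have hXv : ∀ w : V2, w ∈ p → stdRep G ⟨X, hXG⟩ w ∈ p := fun w hw => hp _ w hw
      have hXapp : ∀ w : V2, stdRep G ⟨X, hXG⟩ w = ![-(w 1), w 0] := by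
        intro w
        rw [stdRep_apply]
        simp only [hX]
        funext i
        fin_cases i <;> simp [Matrix.mulVec, dotProduct, Fin.sum_univ_two]
      -- the vector (lam - mu) • projections
      have hw1 : (![(lam - mu) * v 0, 0] : V2) ∈ p := by
        have h1 : stdRep G ⟨A, hAG⟩ v - mu • v ∈ p :=
          p.sub_mem (hp _ v hv) (p.smul_mem _ hv)
        have : stdRep G ⟨A, hAG⟩ v - mu • v = ![(lam - mu) * v 0, 0] := by
          rw [hAv]; funext i; fin_cases i <;>
            simp [Pi.sub_apply, Pi.smul_apply, smul_eq_mul] <;> ring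
        rwa [this] at h1
      have hw2 : (![0, (mu - lam) * v 1] : V2) ∈ p := by
        have h1 : stdRep G ⟨A, hAG⟩ v - lam • v ∈ p :=
          p.sub_mem (hp _ v hv) (p.smul_mem _ hv)
        have : stdRep G ⟨A, hAG⟩ v - lam • v = ![0, (mu - lam) * v 1] := by
          rw [hAv]; funext i; fin_cases i <;>
            simp [Pi.sub_apply, Pi.smul_apply, smul_eq_mul] <;> ring
        rwa [this] at h1
      have hlm : lam - mu ≠ 0 := sub_ne_zero.mpr hne
      -- establish e0 and e1 in p
      have key : (![(1:ℂ), 0] : V2) ∈ p ∧ (![(0:ℂ), 1] : V2) ∈ p := by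
        by_cases h0 : v 0 = 0
        · have h1 : v 1 ≠ 0 := by
            intro h1
            apply hv0
            funext i; fin_cases i <;> simp [h0, h1]
          have hml : mu - lam ≠ 0 := sub_ne_zero.mpr (Ne.symm hne)
          have he1 : (![(0:ℂ), 1] : V2) ∈ p := by
            have := p.smul_mem (((mu - lam) * v 1)⁻¹) hw2
            have heq : ((mu - lam) * v 1)⁻¹ • (![0, (mu - lam) * v 1] : V2) =
                ![(0:ℂ), 1] := by
              funext i
              fin_cases i <;> simp [Pi.smul_apply, smul_eq_mul]
              rw [← _root_.mul_inv_rev, inv_mul_cancel₀ (mul_ne_zero hml h1)]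
            rwa [heq] at this
          have he0 : (![(1:ℂ), 0] : V2) ∈ p := by
            have hs := hXv _ he1
            have heq : stdRep G ⟨X, hXG⟩ (![(0:ℂ), 1] : V2) = ![-(1:ℂ), 0] := by
              rw [hXapp]; funext i; fin_cases i <;> simp
            rw [heq] at hs
            have hs2 := p.smul_mem (-1 : ℂ) hs
            have heq2 : (-1 : ℂ) • (![-(1:ℂ), 0] : V2) = ![(1:ℂ), 0] := by
              funext i; fin_cases i <;> simp
            rwa [heq2] at hs2
          exact ⟨he0, he1⟩
        · have he0 : (![(1:ℂ), 0] : V2) ∈ p := by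
            have := p.smul_mem (((lam - mu) * v 0)⁻¹) hw1
            have heq : ((lam - mu) * v 0)⁻¹ • (![(lam - mu) * v 0, 0] : V2) =
                ![(1:ℂ), 0] := by
              funext i
              fin_cases i <;> simp [Pi.smul_apply, smul_eq_mul]
              rw [← _root_.mul_inv_rev, inv_mul_cancel₀ (mul_ne_zero hlm h0)]
            rwa [heq] at this
          have he1 : (![(0:ℂ), 1] : V2) ∈ p := by
            have hs := hXv _ he0
            have heq : stdRep G ⟨X, hXG⟩ (![(1:ℂ), 0] : V2) = ![(0:ℂ), 1] := by
              rw [hXapp]; funext i; fin_cases i <;> simp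
            rw [heq] at hs
            exact hs
          exact ⟨he0, he1⟩
      rw [Submodule.eq_top_iff']
      intro x
      have hx : x = x 0 • ![(1:ℂ), 0] + x 1 • ![(0:ℂ), 1] := by
        funext i; fin_cases i <;> simp
      rw [hx]
      exact p.add_mem (p.smul_mem _ key.1) (p.smul_mem _ key.2)
  · -- self-duality
    -- every element of G has determinant 1
    have hdet : ∀ g : G, ((g : GL (Fin 2) ℂ) : Matrix (Fin 2) (Fin 2) ℂ).det = 1 := by
      have hle : G ≤ (Matrix.GeneralLinearGroup.det (n := Fin 2) (R := ℂ)).ker := by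
        rw [hG, Subgroup.closure_le]
        intro g hg
        rcases hg with hg | hg
        · subst hg
          simp only [SetLike.mem_coe, MonoidHom.mem_ker]
          ext
          simp [hX, Matrix.det_fin_two_of]
        · simp only [Set.mem_singleton_iff] at hg
          subst hg
          simp only [SetLike.mem_coe, MonoidHom.mem_ker]
          ext
          simp [hA, Matrix.det_fin_two_of, ← Complex.exp_add]
      intro g
      have := hle g.2
      rw [MonoidHom.mem_ker] at this
      have := congrArg (Units.val) this
      simpa using this
    refine ⟨omegaEquiv, ?_⟩
    -- invariance of the form
    have hinv : ∀ (g : G) (v w : V2),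
        omegaEquiv (stdRep G g v) (stdRep G g w) = omegaEquiv v w := by
      intro g v w
      rw [stdRep_apply, stdRep_apply]
      set M := ((g : GL (Fin 2) ℂ) : Matrix (Fin 2) (Fin 2) ℂ)
      have hd : M 0 0 * M 1 1 - M 0 1 * M 1 0 = 1 := by
        have := hdet g
        rwa [Matrix.det_fin_two] at this
      show (M *ᵥ v) 0 * (M *ᵥ w) 1 - (M *ᵥ v) 1 * (M *ᵥ w) 0 = v 0 * w 1 - v 1 * w 0
      simp only [Matrix.mulVec, dotProduct, Fin.sum_univ_two]
      linear_combination (v 0 * w 1 - v 1 * w 0) * hd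
    intro g v
    refine LinearMap.ext fun w => ?_
    have h1 : stdRep G g (stdRep G g⁻¹ w) = w := by
      have hmm : stdRep G g * stdRep G g⁻¹ = 1 := by
        rw [← _root_.map_mul, mul_inv_cancel, _root_.map_one]
      calc stdRep G g (stdRep G g⁻¹ w) = (stdRep G g * stdRep G g⁻¹) w := rfl
        _ = w := by rw [hmm]; rfl
    have h2 := hinv g v (stdRep G g⁻¹ w)
    rw [h1] at h2
    rw [h2]
    rfl
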